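/- Let C be a Möbius strict monoidal category whose monoidal product functor C × C → C has the ULF property. Then the incidence coalgebra structure and the algebra structure given by linearizing the monoidal product make kC into a bialgebra over any field k. -/

import Mathlib

open scoped Classical TensorProduct

/-- The data of a (small, strict) category: objects `O`, morphisms `M`,
source and target maps, identities, and a (guarded) composition.
`comp a b` is the composite `a ∘ b` (first `b`, then `a`); its value is
only relevant when `src a = tgt b`. -/
structure CatStruct (O : Type) (M : Type) where
  src : M → O
  tgt : M → O
  id : O → M
  comp : M → M → M

namespace CatStruct

variable {O M : Type}

/-- The axioms making a `CatStruct` an honest category. -/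
structure IsCat (C : CatStruct O M) : Prop where
  src_id : ∀ x, C.src (C.id x) = x
  tgt_id : ∀ x, C.tgt (C.id x) = x
  src_comp : ∀ a b, C.src a = C.tgt b → C.src (C.comp a b) = C.src b
  tgt_comp : ∀ a b, C.src a = C.tgt b → C.tgt (C.comp a b) = C.tgt a
  id_comp : ∀ f, C.comp (C.id (C.tgt f)) f = f
  comp_id : ∀ f, C.comp f (C.id (C.src f)) = f
  assoc : ∀ a b c, C.src a = C.tgt b → C.src b = C.tgt c →
    C.comp (C.comp a b) c = C.comp a (C.comp b c)

/-- `f` is an identity morphism. -/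
def IsId (C : CatStruct O M) (f : M) : Prop := ∃ x, f = C.id x

/-- The set of 2-decompositions `(a, b)` with `a ∘ b = f`. -/
def N2 (C : CatStruct O M) (f : M) : Set (M × M) :=
  {p | C.src p.1 = C.tgt p.2 ∧ C.comp p.1 p.2 = f}

/-- `ComposesTo C [a₁, …, aₙ] f` means the `aᵢ` are composable and
`a₁ ∘ ⋯ ∘ aₙ = f`. -/
inductive ComposesTo (C : CatStruct O M) : List M → M → Prop
  | single (f : M) : ComposesTo C [f] f
  | cons (a : M) {l : List M} {f : M} (h : ComposesTo C l f)
      (hc : C.src a = C.tgt f) : ComposesTo C (a :: l) (C.comp a f)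

/-- A list of morphisms is nondegenerate if it contains no identities. -/
def NonDeg (C : CatStruct O M) (l : List M) : Prop := ∀ a ∈ l, ¬ C.IsId a

/-- Locally finite: every morphism has finitely many 2-decompositions. -/
def LocallyFinite (C : CatStruct O M) : Prop := ∀ f, (C.N2 f).Finite

/-- Möbius: every morphism has, in total over all lengths, finitely many
nondegenerate decompositions. -/
def Mobius (C : CatStruct O M) : Prop :=
  ∀ f, {l : List M | C.ComposesTo l f ∧ C.NonDeg l}.Finite

/-- `f` has finite length: there is a bound on the lengths of its
nondegenerate decompositions. -/
def FiniteLength (C : CatStruct O M) (f : M) : Prop :=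
  ∃ n, ∀ l, C.ComposesTo l f → C.NonDeg l → l.length ≤ n

end CatStruct

/-- The data of a strict monoidal category: a category together with a
monoidal product on objects and on morphisms and a unit object. -/
structure MonCatStruct (O : Type) (M : Type) extends CatStruct O M where
  objMul : O → O → O
  one : O
  mul : M → M → M

namespace MonCatStruct

variable {O M : Type}

/-- The axioms of a strict monoidal category. -/
structure IsMonCat (C : MonCatStruct O M) : Prop where
  toIsCat : C.toCatStruct.IsCat
  src_mul : ∀ a b, C.src (C.mul a b) = C.objMul (C.src a) (C.src b)
  tgt_mul : ∀ a b, C.tgt (C.mul a b) = C.objMul (C.tgt a) (C.tgt b)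
  id_mul : ∀ x y, C.mul (C.id x) (C.id y) = C.id (C.objMul x y)
  mul_assoc : ∀ a b c, C.mul (C.mul a b) c = C.mul a (C.mul b c)
  one_mul : ∀ f, C.mul (C.id C.one) f = f
  mul_one : ∀ f, C.mul f (C.id C.one) = f
  objMul_assoc : ∀ x y z, C.objMul (C.objMul x y) z = C.objMul x (C.objMul y z)
  objOne_mul : ∀ x, C.objMul C.one x = x
  objMul_one : ∀ x, C.objMul x C.one = x
  interchange : ∀ a b c d, C.src a = C.tgt b → C.src c = C.tgt d →
    C.mul (C.comp a b) (C.comp c d) = C.comp (C.mul a c) (C.mul b d)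

/-- The monoidal product has the unique lifting of factorisations (ULF)
property: for all morphisms `f, g` the induced map
`N₂(f) × N₂(g) → N₂(f·g)` is a bijection. -/
def MulULF (C : MonCatStruct O M) : Prop :=
  ∀ f g, Set.BijOn
    (fun pq : (M × M) × (M × M) => (C.mul pq.1.1 pq.2.1, C.mul pq.1.2 pq.2.2))
    (C.toCatStruct.N2 f ×ˢ C.toCatStruct.N2 g)
    (C.toCatStruct.N2 (C.mul f g))

/-- The monoid of objects is a group. -/
def ObjGroup (C : MonCatStruct O M) : Prop :=
  ∀ x, ∃ y, C.objMul x y = C.one ∧ C.objMul y x = C.one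

/-- A strict 2-group: a strict monoidal groupoid all of whose objects are
invertible with respect to the monoidal product. -/
def TwoGroup (C : MonCatStruct O M) : Prop :=
  C.IsMonCat ∧
  (∀ f, ∃ g, C.src g = C.tgt f ∧ C.tgt g = C.src f ∧
    C.comp f g = C.id (C.tgt f) ∧ C.comp g f = C.id (C.src f)) ∧
  C.ObjGroup

end MonCatStruct

namespace IncAux

open CatStruct

variable {O M : Type} {C : CatStruct O M}

theorem left_mem (hC : C.IsCat) (f : M) : (C.id (C.tgt f), f) ∈ C.N2 f :=
  ⟨hC.src_id _, hC.id_comp f⟩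

theorem right_mem (hC : C.IsCat) (f : M) : (f, C.id (C.src f)) ∈ C.N2 f :=
  ⟨(hC.tgt_id _).symm, hC.comp_id f⟩

theorem idLeft (hC : C.IsCat) {f a b : M} (h : (a, b) ∈ C.N2 f)
    (ha : C.IsId a) : a = C.id (C.tgt f) ∧ b = f := by
  obtain ⟨x, rfl⟩ := ha
  obtain ⟨hcomp, heq⟩ := h
  have hx : x = C.tgt b := by simpa [hC.src_id] using hcomp
  subst hx
  have hb : b = f := by rw [← heq, hC.id_comp]
  subst hb
  exact ⟨rfl, rfl⟩

theorem idRight (hC : C.IsCat) {f a b : M} (h : (a, b) ∈ C.N2 f)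
    (hb : C.IsId b) : a = f ∧ b = C.id (C.src f) := by
  obtain ⟨x, rfl⟩ := hb
  obtain ⟨hcomp, heq⟩ := h
  have hx : x = C.src a := by simpa [hC.tgt_id] using hcomp.symm
  subst hx
  have hb : a = f := by rw [← heq, hC.comp_id]
  subst hb
  exact ⟨rfl, rfl⟩

theorem composesTo_pair {a b f : M} (hc : C.src a = C.tgt b)
    (heq : C.comp a b = f) : C.ComposesTo [a, b] f := by
  have := ComposesTo.cons (C := C) a (ComposesTo.single b) hc
  rwa [heq] at this

/-- Möbius implies locally finite. -/
theorem locFin (hC : C.IsCat) (hMob : C.Mobius) : C.LocallyFinite := by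
  intro f
  have h1 : {p ∈ C.N2 f | ¬ C.IsId p.1 ∧ ¬ C.IsId p.2}.Finite := by
    have himg : (fun p : M × M => [p.1, p.2]) ''
        {p ∈ C.N2 f | ¬ C.IsId p.1 ∧ ¬ C.IsId p.2} ⊆
        {l : List M | C.ComposesTo l f ∧ C.NonDeg l} := by
      rintro l ⟨⟨a, b⟩, ⟨⟨hc, he⟩, hna, hnb⟩, rfl⟩
      refine ⟨composesTo_pair hc he, ?_⟩
      intro x hx
      simp only [List.mem_cons, List.not_mem_nil, or_false] at hx
      rcases hx with rfl | rfl <;> assumption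
    have hinj : Set.InjOn (fun p : M × M => [p.1, p.2])
        {p ∈ C.N2 f | ¬ C.IsId p.1 ∧ ¬ C.IsId p.2} := by
      rintro ⟨a, b⟩ _ ⟨c, d⟩ _ h
      simpa [Prod.ext_iff] using h
    exact Set.Finite.of_finite_image ((hMob f).subset himg) hinj
  have h2 : C.N2 f ⊆ {p ∈ C.N2 f | ¬ C.IsId p.1 ∧ ¬ C.IsId p.2} ∪
      {(C.id (C.tgt f), f), (f, C.id (C.src f))} := by
    rintro ⟨a, b⟩ hp
    by_cases ha : C.IsId a
    · obtain ⟨h1', h2'⟩ := idLeft hC hp ha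
      right; left; simp [h1', h2']
    by_cases hb : C.IsId b
    · obtain ⟨h1', h2'⟩ := idRight hC hp hb
      right; right; simp [h1', h2']
    · exact Or.inl ⟨hp, ha, hb⟩
  exact Set.Finite.subset (h1.union ((Set.finite_singleton _).insert _)) h2

/-- An alternating list `[a, b, a, b, …]` with `n+1` copies of the pair. -/
def repList (a b : M) : ℕ → List M
  | 0 => [a, b]
  | n + 1 => a :: b :: repList a b n

theorem repList_length (a b : M) : ∀ n, (repList a b n).length = 2 * n + 2
  | 0 => rfl
  | n + 1 => by simp [repList, repList_length a b n]; ring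

theorem repList_composes (hC : C.IsCat) {a b : M} {z : O}
    (hc : C.src a = C.tgt b) (he : C.comp a b = C.id z) :
    ∀ n, C.ComposesTo (repList a b n) (C.id z)
  | 0 => composesTo_pair hc he
  | n + 1 => by
    have ih := repList_composes hC hc he n
    have hsb : C.src b = z := by
      have := hC.src_comp a b hc
      rw [he, hC.src_id] at this
      exact this.symm
    have h1 : C.ComposesTo (b :: repList a b n) (C.comp b (C.id z)) :=
      ComposesTo.cons b ih (by rw [hC.tgt_id, hsb])
    have h2 : C.comp b (C.id z) = b := by
      rw [← hsb, hC.comp_id]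
    rw [h2] at h1
    have h3 : C.ComposesTo (a :: b :: repList a b n) (C.comp a b) :=
      ComposesTo.cons a h1 hc
    rwa [he] at h3

theorem N2_id (hC : C.IsCat) (hMob : C.Mobius) (z : O) :
    C.N2 (C.id z) = {(C.id z, C.id z)} := by
  ext ⟨a, b⟩
  constructor
  · intro hp
    by_cases ha : C.IsId a
    · obtain ⟨h1, h2⟩ := idLeft hC hp ha
      simp [h1, h2, hC.tgt_id]
    by_cases hb : C.IsId b
    · obtain ⟨h1, h2⟩ := idRight hC hp hb
      simp [h1, h2, hC.src_id]
    · exfalso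
      obtain ⟨hc, he⟩ := hp
      have hinf : {l : List M | C.ComposesTo l (C.id z) ∧ C.NonDeg l}.Infinite := by
        apply Set.infinite_of_injective_forall_mem (f := repList a b)
          (hi := ?_) (hf := ?_)
        · intro m n hmn
          have := congrArg List.length hmn
          rw [repList_length, repList_length] at this
          omega
        · intro n
          refine ⟨repList_composes hC hc he n, ?_⟩
          intro x hx
          have : ∀ n, x ∈ repList a b n → x = a ∨ x = b := by
            intro n
            induction n with
            | zero => intro h; simpa [repList] using h
            | succ m ih =>
              intro h
              simp only [repList, List.mem_cons] at h
              rcases h with rfl | rfl | h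
              · exact Or.inl rfl
              · exact Or.inr rfl
              · exact ih h
          rcases this n hx with rfl | rfl <;> assumption
      exact hinf (hMob (C.id z))
  · rintro h
    simp only [Set.mem_singleton_iff, Prod.ext_iff] at h
    obtain ⟨rfl, rfl⟩ := h
    refine ⟨by rw [hC.src_id, hC.tgt_id], ?_⟩
    have := hC.id_comp (C.id z)
    rwa [hC.tgt_id] at this

end IncAux

set_option maxHeartbeats 1000000 in
set_option synthInstance.maxHeartbeats 400000 in
/-- If `C` is a Möbius strict monoidal category whose monoidal
product is ULF, then the incidence coalgebra together with the linearised
monoidal product make `kC` a bialgebra. -/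
theorem incidence_bialgebra {O M : Type} (C : MonCatStruct O M)
    (hC : C.IsMonCat) (hMob : C.toCatStruct.Mobius) (hULF : C.MulULF)
    (k : Type) [Field k] :
    ∃ (Δ : (M →₀ k) →ₗ[k] TensorProduct k (M →₀ k) (M →₀ k))
      (ε : (M →₀ k) →ₗ[k] k)
      (m : (M →₀ k) →ₗ[k] (M →₀ k) →ₗ[k] (M →₀ k)),
      -- the incidence coproduct and counit
      (∀ f : M, Δ (Finsupp.single f 1) =
        ∑ᶠ p ∈ C.toCatStruct.N2 f,
          Finsupp.single p.1 (1 : k) ⊗ₜ[k] Finsupp.single p.2 (1 : k)) ∧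
      (∀ f : M, ε (Finsupp.single f 1) =
        if C.toCatStruct.IsId f then (1 : k) else 0) ∧
      -- coalgebra axioms
      (∀ v, (TensorProduct.assoc k (M →₀ k) (M →₀ k) (M →₀ k))
          ((TensorProduct.map Δ LinearMap.id) (Δ v)) =
        (TensorProduct.map LinearMap.id Δ) (Δ v)) ∧
      (∀ v, (TensorProduct.lid k (M →₀ k))
          ((TensorProduct.map ε LinearMap.id) (Δ v)) = v) ∧
      (∀ v, (TensorProduct.rid k (M →₀ k))
          ((TensorProduct.map LinearMap.id ε) (Δ v)) = v) ∧
      -- algebra structure: the linearised monoidal product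
      (∀ f g : M, m (Finsupp.single f 1) (Finsupp.single g 1) =
        Finsupp.single (C.mul f g) (1 : k)) ∧
      (∀ a b c, m (m a b) c = m a (m b c)) ∧
      (∀ a, m (Finsupp.single (C.id C.one) 1) a = a) ∧
      (∀ a, m a (Finsupp.single (C.id C.one) 1) = a) ∧
      -- bialgebra compatibility
      (∀ f g : M, Δ (Finsupp.single (C.mul f g) 1) =
        ∑ᶠ p ∈ C.toCatStruct.N2 f, ∑ᶠ q ∈ C.toCatStruct.N2 g,
          Finsupp.single (C.mul p.1 q.1) (1 : k) ⊗ₜ[k]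
            Finsupp.single (C.mul p.2 q.2) (1 : k)) ∧
      (∀ f g : M, ε (m (Finsupp.single f 1) (Finsupp.single g 1)) =
        ε (Finsupp.single f 1) * ε (Finsupp.single g 1)) ∧
      (Δ (Finsupp.single (C.id C.one) 1) =
        Finsupp.single (C.id C.one) (1 : k) ⊗ₜ[k]
          Finsupp.single (C.id C.one) (1 : k)) ∧
      (ε (Finsupp.single (C.id C.one) 1) = 1) := by
  classical
  have hcat : C.toCatStruct.IsCat := hC.toIsCat
  have hfin : C.toCatStruct.LocallyFinite := IncAux.locFin hcat hMob
  set Δ : (M →₀ k) →ₗ[k] TensorProduct k (M →₀ k) (M →₀ k) :=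
    Finsupp.lsum k (fun f => LinearMap.toSpanSingleton k _
      (∑ p ∈ (hfin f).toFinset,
        Finsupp.single p.1 (1 : k) ⊗ₜ[k] Finsupp.single p.2 (1 : k))) with hΔdef
  set ε : (M →₀ k) →ₗ[k] k :=
    Finsupp.lsum k (fun f => LinearMap.toSpanSingleton k k
      (if C.toCatStruct.IsId f then (1 : k) else 0)) with hεdef
  set m : (M →₀ k) →ₗ[k] (M →₀ k) →ₗ[k] (M →₀ k) :=
    Finsupp.lsum k (fun f => LinearMap.toSpanSingleton k _
      ((Finsupp.lsum k (fun g => Finsupp.lsingle (C.mul f g))) :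
        (M →₀ k) →ₗ[k] (M →₀ k))) with hmdef
  have hΔ : ∀ f : M, Δ (Finsupp.single f 1) = ∑ p ∈ (hfin f).toFinset,
      Finsupp.single p.1 (1 : k) ⊗ₜ[k] Finsupp.single p.2 (1 : k) := by
    intro f
    rw [hΔdef]
    simp [Finsupp.lsum_single, LinearMap.toSpanSingleton_apply]
  have hε : ∀ f : M, ε (Finsupp.single f 1) =
      if C.toCatStruct.IsId f then (1 : k) else 0 := by
    intro f
    rw [hεdef]
    simp [Finsupp.lsum_single, LinearMap.toSpanSingleton_apply]
  have hm : ∀ (f g : M) (r s : k), m (Finsupp.single f r) (Finsupp.single g s) =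
      Finsupp.single (C.mul f g) (r * s) := by
    intro f g r s
    rw [hmdef]
    simp [Finsupp.lsum_single, LinearMap.toSpanSingleton_apply,
      Finsupp.smul_single, smul_eq_mul, mul_comm]
  -- the identity is the only 2-decomposition of an identity
  have hTid : ∀ z : O, (hfin (C.id z)).toFinset = {(C.id z, C.id z)} := by
    intro z
    ext p
    rw [Set.Finite.mem_toFinset, IncAux.N2_id hcat hMob z]
    simp
  refine ⟨Δ, ε, m, ?_, hε, ?_, ?_, ?_, ?_, ?_, ?_, ?_, ?_, ?_, ?_, ?_⟩
  · -- coproduct formula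
    intro f
    rw [hΔ f, finsum_mem_eq_finite_toFinset_sum _ (hfin f)]
  · -- coassociativity
    have key : ∀ f : M,
        (TensorProduct.assoc k (M →₀ k) (M →₀ k) (M →₀ k))
          ((TensorProduct.map Δ LinearMap.id) (Δ (Finsupp.single f 1))) =
        (TensorProduct.map LinearMap.id Δ) (Δ (Finsupp.single f 1)) := by
      intro f
      rw [hΔ f]
      simp only [map_sum, TensorProduct.map_tmul, LinearMap.id_coe, id_eq, hΔ,
        TensorProduct.sum_tmul, TensorProduct.tmul_sum, TensorProduct.assoc_tmul]
      rw [Finset.sum_sigma', Finset.sum_sigma']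
      refine Finset.sum_nbij'
        (i := fun x : Σ _ : M × M, M × M =>
          (⟨(x.2.1, C.comp x.2.2 x.1.2), (x.2.2, x.1.2)⟩ : Σ _ : M × M, M × M))
        (j := fun y : Σ _ : M × M, M × M =>
          (⟨(C.comp y.1.1 y.2.1, y.2.2), (y.1.1, y.2.1)⟩ : Σ _ : M × M, M × M))
        ?_ ?_ ?_ ?_ ?_
      · rintro ⟨⟨a, b⟩, x, y⟩ hmem
        rw [Finset.mem_sigma] at hmem
        obtain ⟨h1, h2⟩ := hmem
        rw [Set.Finite.mem_toFinset] at h1 h2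
        obtain ⟨hab, heab⟩ := h1
        obtain ⟨hxy, hexy⟩ := h2
        rw [Finset.mem_sigma, Set.Finite.mem_toFinset, Set.Finite.mem_toFinset]
        have hyb : C.src y = C.tgt b := by
          rw [← hab, ← hC.toIsCat.src_comp x y hxy, hexy]
        refine ⟨⟨?_, ?_⟩, hyb, rfl⟩
        · rw [hC.toIsCat.tgt_comp y b hyb, hxy]
        · rw [← hC.toIsCat.assoc x y b hxy hyb, hexy, heab]
      · rintro ⟨⟨x, w⟩, y, b⟩ hmem
        rw [Finset.mem_sigma] at hmem
        obtain ⟨h1, h2⟩ := hmem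
        rw [Set.Finite.mem_toFinset] at h1 h2
        obtain ⟨hxw, hexw⟩ := h1
        obtain ⟨hyb, heyb⟩ := h2
        rw [Finset.mem_sigma, Set.Finite.mem_toFinset, Set.Finite.mem_toFinset]
        have hxy : C.src x = C.tgt y := by
          rw [hxw, ← heyb, hC.toIsCat.tgt_comp y b hyb]
        dsimp only
        refine ⟨⟨?_, ?_⟩, hxy, rfl⟩
        · rw [hC.toIsCat.src_comp x y hxy, hyb]
        · rw [hC.toIsCat.assoc x y b hxy hyb, heyb, hexw]
      · rintro ⟨⟨a, b⟩, x, y⟩ hmem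
        rw [Finset.mem_sigma] at hmem
        obtain ⟨h1, h2⟩ := hmem
        rw [Set.Finite.mem_toFinset] at h2
        dsimp only
        simp [h2.2]
      · rintro ⟨⟨x, w⟩, y, b⟩ hmem
        rw [Finset.mem_sigma] at hmem
        obtain ⟨h1, h2⟩ := hmem
        rw [Set.Finite.mem_toFinset] at h2
        dsimp only
        simp [h2.2]
      · rintro ⟨⟨a, b⟩, x, y⟩ _
        rfl
    intro v
    induction v using Finsupp.induction_linear with
    | zero => simp only [map_zero, LinearEquiv.map_zero]
    | add x y hx hy => simp only [map_add, LinearEquiv.map_add, hx, hy]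
    | single f r =>
      have hs : (Finsupp.single f r : M →₀ k) = r • Finsupp.single f 1 := by
        rw [Finsupp.smul_single, smul_eq_mul, mul_one]
      simp only [hs, map_smul, LinearEquiv.map_smul, key f]
  · -- left counit
    have key : ∀ f : M,
        (TensorProduct.lid k (M →₀ k))
          ((TensorProduct.map ε LinearMap.id) (Δ (Finsupp.single f 1))) =
        Finsupp.single f 1 := by
      intro f
      rw [hΔ f]
      simp only [map_sum, TensorProduct.map_tmul, LinearMap.id_coe, id_eq, hε,
        TensorProduct.lid_tmul]
      rw [Finset.sum_eq_single_of_mem (C.id (C.tgt f), f)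
        ((hfin f).mem_toFinset.mpr (IncAux.left_mem hcat f))]
      · rw [if_pos ⟨C.tgt f, rfl⟩]; simp
      · rintro ⟨a, b⟩ hp hne
        rw [Set.Finite.mem_toFinset] at hp
        by_cases ha : C.toCatStruct.IsId a
        · exact absurd (Prod.ext (IncAux.idLeft hcat hp ha).1
            (IncAux.idLeft hcat hp ha).2) hne
        · rw [if_neg ha]; simp
    intro v
    induction v using Finsupp.induction_linear with
    | zero => simp only [map_zero, LinearEquiv.map_zero]
    | add x y hx hy => simp only [map_add, LinearEquiv.map_add, hx, hy]
    | single f r =>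
      have hs : (Finsupp.single f r : M →₀ k) = r • Finsupp.single f 1 := by
        rw [Finsupp.smul_single, smul_eq_mul, mul_one]
      simp only [hs, map_smul, LinearEquiv.map_smul, key f]
  · -- right counit
    have key : ∀ f : M,
        (TensorProduct.rid k (M →₀ k))
          ((TensorProduct.map LinearMap.id ε) (Δ (Finsupp.single f 1))) =
        Finsupp.single f 1 := by
      intro f
      rw [hΔ f]
      simp only [map_sum, TensorProduct.map_tmul, LinearMap.id_coe, id_eq, hε,
        TensorProduct.rid_tmul]
      rw [Finset.sum_eq_single_of_mem (f, C.id (C.src f))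
        ((hfin f).mem_toFinset.mpr (IncAux.right_mem hcat f))]
      · rw [if_pos ⟨C.src f, rfl⟩]; simp
      · rintro ⟨a, b⟩ hp hne
        rw [Set.Finite.mem_toFinset] at hp
        by_cases hb : C.toCatStruct.IsId b
        · exact absurd (Prod.ext (IncAux.idRight hcat hp hb).1
            (IncAux.idRight hcat hp hb).2) hne
        · rw [if_neg hb]; simp
    intro v
    induction v using Finsupp.induction_linear with
    | zero => simp only [map_zero, LinearEquiv.map_zero]
    | add x y hx hy => simp only [map_add, LinearEquiv.map_add, hx, hy]
    | single f r =>
      have hs : (Finsupp.single f r : M →₀ k) = r • Finsupp.single f 1 := by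
        rw [Finsupp.smul_single, smul_eq_mul, mul_one]
      simp only [hs, map_smul, LinearEquiv.map_smul, key f]
  · -- product on basis elements
    intro f g
    simpa using hm f g 1 1
  · -- associativity
    intro a b c
    induction a using Finsupp.induction_linear with
    | zero => simp
    | add x y hx hy => simp only [map_add, LinearMap.add_apply, hx, hy]
    | single f r =>
      induction b using Finsupp.induction_linear with
      | zero => simp
      | add x y hx hy => simp only [map_add, LinearMap.add_apply, hx, hy]
      | single g s =>
        induction c using Finsupp.induction_linear with
        | zero => simp
        | add x y hx hy => simp only [map_add, LinearMap.add_apply, hx, hy]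
        | single h t =>
          rw [hm f g r s, hm (C.mul f g) h (r * s) t, hm g h s t,
            hm f (C.mul g h) r (s * t), hC.mul_assoc, mul_assoc]
  · -- left unit
    intro a
    induction a using Finsupp.induction_linear with
    | zero => simp
    | add x y hx hy => simp only [map_add, hx, hy]
    | single f r => rw [hm (C.id C.one) f 1 r, hC.one_mul, one_mul]
  · -- right unit
    intro a
    induction a using Finsupp.induction_linear with
    | zero => simp
    | add x y hx hy => simp only [map_add, LinearMap.add_apply, hx, hy]
    | single f r => rw [hm f (C.id C.one) r 1, hC.mul_one, mul_one]
  · -- bialgebra compatibility via ULF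
    intro f g
    rw [hΔ (C.mul f g)]
    rw [finsum_mem_eq_finite_toFinset_sum _ (hfin f)]
    have hinner : ∀ p : M × M, (∑ᶠ q ∈ C.toCatStruct.N2 g,
        Finsupp.single (C.mul p.1 q.1) (1 : k) ⊗ₜ[k]
          Finsupp.single (C.mul p.2 q.2) (1 : k)) =
        ∑ q ∈ (hfin g).toFinset,
          Finsupp.single (C.mul p.1 q.1) (1 : k) ⊗ₜ[k]
            Finsupp.single (C.mul p.2 q.2) (1 : k) := by
      intro p
      exact finsum_mem_eq_finite_toFinset_sum _ (hfin g)
    simp only [hinner]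
    rw [← Finset.sum_product']
    refine (Finset.sum_nbij
      (i := fun pq : (M × M) × (M × M) =>
        (C.mul pq.1.1 pq.2.1, C.mul pq.1.2 pq.2.2)) ?_ ?_ ?_ ?_).symm
    · intro pq hpq
      rw [Finset.mem_product, Set.Finite.mem_toFinset, Set.Finite.mem_toFinset] at hpq
      rw [Set.Finite.mem_toFinset]
      exact (hULF f g).mapsTo ⟨hpq.1, hpq.2⟩
    · intro pq hpq pq' hpq' heq
      rw [Finset.coe_product, Set.Finite.coe_toFinset, Set.Finite.coe_toFinset] at *
      exact (hULF f g).injOn hpq hpq' heq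
    · intro r hr
      have hr' : r ∈ C.toCatStruct.N2 (C.mul f g) := by simpa using hr
      simpa [Finset.coe_product, Set.Finite.coe_toFinset] using (hULF f g).surjOn hr'
    · intro pq _
      rfl
  · -- counit is multiplicative
    have hIdMul : ∀ f g : M, C.toCatStruct.IsId (C.mul f g) ↔
        (C.toCatStruct.IsId f ∧ C.toCatStruct.IsId g) := by
      intro f g
      constructor
      · rintro ⟨z, hz⟩
        have hbij := hULF f g
        rw [hz, IncAux.N2_id hcat hMob z] at hbij
        have hmem1 : ((C.id (C.tgt f), f), (C.id (C.tgt g), g)) ∈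
            C.toCatStruct.N2 f ×ˢ C.toCatStruct.N2 g :=
          ⟨IncAux.left_mem hcat f, IncAux.left_mem hcat g⟩
        have hmem2 : ((f, C.id (C.src f)), (C.id (C.tgt g), g)) ∈
            C.toCatStruct.N2 f ×ˢ C.toCatStruct.N2 g :=
          ⟨IncAux.right_mem hcat f, IncAux.left_mem hcat g⟩
        have hmem3 : ((C.id (C.tgt f), f), (g, C.id (C.src g))) ∈
            C.toCatStruct.N2 f ×ˢ C.toCatStruct.N2 g :=
          ⟨IncAux.left_mem hcat f, IncAux.right_mem hcat g⟩
        have heq12 := hbij.injOn hmem1 hmem2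
          ((hbij.mapsTo hmem1).trans (hbij.mapsTo hmem2).symm)
        have heq13 := hbij.injOn hmem1 hmem3
          ((hbij.mapsTo hmem1).trans (hbij.mapsTo hmem3).symm)
        simp only [Prod.mk.injEq] at heq12 heq13
        exact ⟨⟨C.tgt f, heq12.1.1.symm⟩, ⟨C.tgt g, heq13.2.1.symm⟩⟩
      · rintro ⟨⟨x, rfl⟩, ⟨y, rfl⟩⟩
        exact ⟨C.objMul x y, hC.id_mul x y⟩
    intro f g
    rw [hm f g 1 1, mul_one, hε, hε, hε, hIdMul f g]
    by_cases hf : C.toCatStruct.IsId f <;> by_cases hg : C.toCatStruct.IsId g <;>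
      simp [hf, hg]
  · -- coproduct of the unit
    rw [hΔ (C.id C.one), hTid C.one, Finset.sum_singleton]
  · -- counit of the unit
    rw [hε, if_pos ⟨C.one, rfl⟩]
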